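/- arXiv:1501.03939 — 2 statements merged into one kernel-verified Lean document; each statement's English description precedes it below -/
import Mathlib

section
/- Let Ω = C(ℝ₊, ℝ^d) be the canonical space with canonical filtration F, let E be a Polish space, and let Y : ℝ₊ × Ω → E be a stochastic process. Then the following statements are equivalent: (i) Y is F-predictable; (ii) Y is F-optional; (iii) Y is F-progressively measurable; (iv) Y is B(ℝ₊) ⊗ 𝓕-measurable and F-adapted; (v) Y is B(ℝ₊) ⊗ 𝓕-measurable and satisfies Y_s(ω) = Y_s([ω]_s) for all (s, ω) ∈ ℝ₊ × Ω. -/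
open MeasureTheory
open scoped NNReal

noncomputable section

/-- The canonical space `Ω = C(ℝ₊, ℝ^d)` of continuous paths. -/
abbrev CanonSp (d : ℕ) := C(ℝ≥0, EuclideanSpace ℝ (Fin d))

/-- The Borel σ-field `𝓕` of the canonical space. -/
instance (d : ℕ) : MeasurableSpace (CanonSp d) := borel _
instance (d : ℕ) : BorelSpace (CanonSp d) := ⟨rfl⟩

/-- The canonical (raw) filtration `F_s = σ(B_u, u ≤ s)` on the canonical space. -/
def canonFil (d : ℕ) : Filtration ℝ≥0 (inferInstance : MeasurableSpace (CanonSp d)) where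
  seq s := ⨆ u ∈ Set.Iic s, MeasurableSpace.comap (fun ω : CanonSp d => ω u) inferInstance
  mono' := fun s t hst => biSup_mono fun u (hu : u ≤ s) => hu.trans hst
  le' := fun _s => iSup₂_le fun u _ =>
    Measurable.comap_le (ContinuousEvalConst.continuous_eval_const u).measurable

/-- The stopped path `[ω]_t = (ω(t ∧ s))_{s ≥ 0}`. -/
def stoppedPath {d : ℕ} (ω : CanonSp d) (t : ℝ≥0) : CanonSp d :=
  ω.comp ⟨fun s => min t s, continuous_const.min continuous_id⟩

/-- The predictable σ-algebra on `ℝ₊ × α` associated with a filtration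
`G = (G_s)`: it is generated by the sets `{0} × A` with `A ∈ G_0` and
`(u, v] × A` with `u < v` and `A ∈ G_u`. -/
def predictableSigma {α : Type*} (G : ℝ≥0 → MeasurableSpace α) :
    MeasurableSpace (ℝ≥0 × α) :=
  MeasurableSpace.generateFrom
    ({S | ∃ A : Set α, MeasurableSet[G 0] A ∧ S = ({0} : Set ℝ≥0) ×ˢ A} ∪
     {S | ∃ (u v : ℝ≥0) (A : Set α), u < v ∧ MeasurableSet[G u] A ∧ S = Set.Ioc u v ×ˢ A})

/-- The optional σ-algebra on `ℝ₊ × α` associated with a filtration `G = (G_s)`: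
it is generated by the right-continuous `(G_s)`-adapted real-valued processes. -/
def optionalSigma {α : Type*} (G : ℝ≥0 → MeasurableSpace α) :
    MeasurableSpace (ℝ≥0 × α) :=
  MeasurableSpace.generateFrom
    {S | ∃ Z : ℝ≥0 → α → ℝ,
      (∀ u, Measurable[G u] (Z u)) ∧
      (∀ ω, ∀ u : ℝ≥0, ContinuousWithinAt (fun v => Z v ω) (Set.Ici u) u) ∧
      MeasurableSet[MeasurableSpace.comap (fun p : ℝ≥0 × α => Z p.1 p.2) inferInstance] S}

/-- A process `Y` is progressively measurable for the filtration `G = (G_s)` if for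
every `t` its restriction to `[0, t] × α` is `B([0, t]) ⊗ G_t`-measurable. -/
def ProgMeas {α E : Type*} [MeasurableSpace E] (G : ℝ≥0 → MeasurableSpace α)
    (Y : ℝ≥0 → α → E) : Prop :=
  ∀ t : ℝ≥0,
    Measurable[(inferInstance : MeasurableSpace (Set.Iic t)).prod (G t)]
      (fun p : Set.Iic t × α => Y p.1.1 p.2)

/-! ### Auxiliary material -/

section Aux

open Set Filter Topology

namespace CMT

lemma two_pow_pos (n : ℕ) : (0:ℝ≥0) < 2 ^ n := pow_pos two_pos n

/-- The left endpoint of the dyadic interval of generation `n` containing `t`. -/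
def dyl (n : ℕ) (t : ℝ≥0) : ℝ≥0 := ((⌈t * 2 ^ n⌉₊ - 1 : ℕ) : ℝ≥0) / 2 ^ n

lemma mem_Ioc_iff {n k : ℕ} {t : ℝ≥0} :
    t ∈ Set.Ioc ((k : ℝ≥0) / 2 ^ n) (((k : ℝ≥0) + 1) / 2 ^ n) ↔
      (k : ℝ≥0) < t * 2 ^ n ∧ t * 2 ^ n ≤ (k : ℝ≥0) + 1 := by
  rw [Set.mem_Ioc, div_lt_iff₀ (two_pow_pos n), le_div_iff₀ (two_pow_pos n)]

lemma dyl_eq {n k : ℕ} {t : ℝ≥0}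
    (h : t ∈ Set.Ioc ((k : ℝ≥0) / 2 ^ n) (((k : ℝ≥0) + 1) / 2 ^ n)) :
    dyl n t = (k : ℝ≥0) / 2 ^ n := by
  rw [mem_Ioc_iff] at h
  have : ⌈t * 2 ^ n⌉₊ = k + 1 := by
    rw [Nat.ceil_eq_iff (Nat.succ_ne_zero k)]
    simpa using h
  simp [dyl, this]

lemma exists_mem_Ioc {t : ℝ≥0} (ht : 0 < t) (n : ℕ) :
    ∃ k : ℕ, t ∈ Set.Ioc ((k : ℝ≥0) / 2 ^ n) (((k : ℝ≥0) + 1) / 2 ^ n) := by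
  have hpos : 0 < t * 2 ^ n := mul_pos ht (two_pow_pos n)
  have h1 : 1 ≤ ⌈t * 2 ^ n⌉₊ := Nat.one_le_iff_ne_zero.2 (Nat.ceil_pos.2 hpos).ne'
  have hsum : ⌈t * 2 ^ n⌉₊ - 1 + 1 = ⌈t * 2 ^ n⌉₊ := by omega
  refine ⟨⌈t * 2 ^ n⌉₊ - 1, mem_Ioc_iff.2 ⟨?_, ?_⟩⟩
  · exact Nat.lt_ceil.1 (by omega)
  · have h2 := Nat.le_ceil (t * 2 ^ n)
    calc t * 2 ^ n ≤ (⌈t * 2 ^ n⌉₊ : ℝ≥0) := h2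
    _ = ((⌈t * 2 ^ n⌉₊ - 1 + 1 : ℕ) : ℝ≥0) := by rw [hsum]
    _ = ((⌈t * 2 ^ n⌉₊ - 1 : ℕ) : ℝ≥0) + 1 := by push_cast; ring

lemma dyl_le (n : ℕ) (t : ℝ≥0) : dyl n t ≤ t := by
  rcases eq_or_lt_of_le (zero_le : (0:ℝ≥0) ≤ t) with h | h
  · simp [dyl, ← h]
  · obtain ⟨k, hk⟩ := exists_mem_Ioc h n
    rw [dyl_eq hk]
    exact hk.1.le

lemma tendsto_dyl (t : ℝ≥0) : Filter.Tendsto (fun n => dyl n t) Filter.atTop (𝓝 t) := by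
  rcases eq_or_lt_of_le (zero_le : (0:ℝ≥0) ≤ t) with h | h
  · simp [dyl, ← h]
  · rw [← NNReal.tendsto_coe]
    have hinv : Filter.Tendsto (fun n : ℕ => ((2:ℝ) ^ n)⁻¹) Filter.atTop (𝓝 0) := by
      simpa [inv_pow] using tendsto_pow_atTop_nhds_zero_of_lt_one
        (by norm_num : (0:ℝ) ≤ 2⁻¹) (by norm_num : (2:ℝ)⁻¹ < 1)
    apply tendsto_of_tendsto_of_tendsto_of_le_of_le
      (g := fun n : ℕ => (t : ℝ) - ((2:ℝ) ^ n)⁻¹) (h := fun _ => (t : ℝ))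
    · simpa using tendsto_const_nhds.sub hinv
    · exact tendsto_const_nhds
    · intro n
      show (t : ℝ) - ((2:ℝ) ^ n)⁻¹ ≤ ((dyl n t : ℝ≥0) : ℝ)
      obtain ⟨k, hk⟩ := exists_mem_Ioc h n
      have h2 := (mem_Ioc_iff.1 hk).2
      rw [dyl_eq hk]
      have hc : (t : ℝ) * 2 ^ n ≤ (k : ℝ) + 1 := by exact_mod_cast h2
      have : (t : ℝ) - (2 ^ n)⁻¹ ≤ (k : ℝ) / 2 ^ n := by
        rw [sub_le_iff_le_add, div_add' _ _ _ (by positivity),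
          le_div_iff₀ (by positivity : (0:ℝ) < 2 ^ n)]
        have hone : ((2:ℝ) ^ n)⁻¹ * 2 ^ n = 1 := inv_mul_cancel₀ (by positivity)
        linarith [hc]
      simpa [NNReal.coe_div] using this
    · intro n
      show ((dyl n t : ℝ≥0) : ℝ) ≤ (t : ℝ)
      exact_mod_cast dyl_le n t

lemma dyl_zero (n : ℕ) : dyl n 0 = 0 := by simp [dyl]

end CMT

open CMT in
/-- An adapted process which is (left-)continuous in time is predictable. -/
theorem measurable_predictable {α : Type*} {G : ℝ≥0 → MeasurableSpace α}
    {E' : Type*} [TopologicalSpace E'] [TopologicalSpace.PseudoMetrizableSpace E']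
    [MeasurableSpace E'] [BorelSpace E']
    (Z : ℝ≥0 → α → E') (hZ : ∀ u, Measurable[G u] (Z u))
    (hc : ∀ a, Continuous fun v => Z v a) :
    Measurable[predictableSigma G] fun p : ℝ≥0 × α => Z p.1 p.2 := by
  letI : MeasurableSpace (ℝ≥0 × α) := predictableSigma G
  have hn : ∀ n : ℕ, Measurable fun p : ℝ≥0 × α => Z (dyl n p.1) p.2 := by
    intro n s hs
    have hdecomp : (fun p : ℝ≥0 × α => Z (dyl n p.1) p.2) ⁻¹' s =
        (({0} : Set ℝ≥0) ×ˢ (Z 0 ⁻¹' s)) ∪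
        ⋃ k : ℕ, (Set.Ioc ((k:ℝ≥0)/2^n) (((k:ℝ≥0)+1)/2^n)) ×ˢ (Z ((k:ℝ≥0)/2^n) ⁻¹' s) := by
      ext ⟨t, a⟩
      simp only [Set.mem_preimage, Set.mem_union, Set.mem_iUnion, Set.mem_prod,
        Set.mem_singleton_iff]
      constructor
      · intro h
        rcases eq_or_lt_of_le (zero_le : (0:ℝ≥0) ≤ t) with h0 | h0
        · exact Or.inl ⟨h0.symm, by rwa [← h0, dyl_zero] at h⟩
        · obtain ⟨k, hk⟩ := exists_mem_Ioc h0 n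
          exact Or.inr ⟨k, hk, by rwa [dyl_eq hk] at h⟩
      · rintro (⟨rfl, h⟩ | ⟨k, hk, h⟩)
        · rwa [dyl_zero]
        · rwa [dyl_eq hk]
    rw [hdecomp]
    refine MeasurableSet.union ?_ (MeasurableSet.iUnion fun k => ?_)
    · exact MeasurableSpace.measurableSet_generateFrom (Or.inl ⟨_, hZ 0 hs, rfl⟩)
    · refine MeasurableSpace.measurableSet_generateFrom (Or.inr ⟨_, _, _, ?_, hZ _ hs, rfl⟩)
      rw [div_lt_div_iff_of_pos_right (two_pow_pos n)]
      exact lt_add_one _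
  exact measurable_of_tendsto_metrizable hn
    (tendsto_pi_nhds.2 fun p => ((hc p.2).tendsto p.1).comp (tendsto_dyl p.1))

open CMT in
/-- An adapted, right-continuous real process is progressively measurable. -/
theorem measurable_rightCont_restrict {α : Type*} {G : ℝ≥0 → MeasurableSpace α}
    (hG : Monotone G) (Z : ℝ≥0 → α → ℝ) (hZ : ∀ u, Measurable[G u] (Z u))
    (hrc : ∀ a u, ContinuousWithinAt (fun v => Z v a) (Set.Ici u) u) (t : ℝ≥0) :
    Measurable[(inferInstance : MeasurableSpace (Set.Iic t)).prod (G t)]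
      (fun p : Set.Iic t × α => Z p.1.1 p.2) := by
  letI : MeasurableSpace α := G t
  letI : MeasurableSpace (Set.Iic t × α) :=
    (inferInstance : MeasurableSpace (Set.Iic t)).prod (G t)
  set ρ : ℕ → Set.Iic t → ℝ≥0 :=
    fun n s => min t (((⌊(s : ℝ≥0) * 2 ^ n⌋₊ + 1 : ℕ) : ℝ≥0) / 2 ^ n) with hρ
  have hlow : ∀ n (s : Set.Iic t), (s : ℝ≥0) ≤ ρ n s := by
    intro n s
    refine le_min s.2 ?_
    rw [le_div_iff₀ (two_pow_pos n)]
    exact_mod_cast (Nat.lt_floor_add_one ((s : ℝ≥0) * 2 ^ n)).le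
  have hup : ∀ n (s : Set.Iic t), ((ρ n s : ℝ≥0) : ℝ) ≤ (s : ℝ≥0) + ((2:ℝ) ^ n)⁻¹ := by
    intro n s
    have h1 : (⌊(s : ℝ≥0) * 2 ^ n⌋₊ : ℝ) ≤ ((s : ℝ≥0) : ℝ) * 2 ^ n := by
      exact_mod_cast Nat.floor_le (zero_le : (0:ℝ≥0) ≤ (s : ℝ≥0) * 2 ^ n)
    have h2 : ((ρ n s : ℝ≥0) : ℝ) ≤ ((⌊(s : ℝ≥0) * 2 ^ n⌋₊ : ℝ) + 1) / 2 ^ n := by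
      have := NNReal.coe_le_coe.2
        (min_le_right t (((⌊(s : ℝ≥0) * 2 ^ n⌋₊ + 1 : ℕ) : ℝ≥0) / 2 ^ n))
      refine le_trans this (le_of_eq ?_)
      push_cast
      ring
    refine h2.trans ?_
    rw [div_le_iff₀ (by positivity : (0:ℝ) < 2 ^ n)]
    have hone : ((2:ℝ) ^ n)⁻¹ * 2 ^ n = 1 := inv_mul_cancel₀ (by positivity)
    nlinarith [h1]
  have hρtend : ∀ s : Set.Iic t,
      Filter.Tendsto (fun n => ρ n s) Filter.atTop (𝓝[Set.Ici (s : ℝ≥0)] (s : ℝ≥0)) := by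
    intro s
    rw [tendsto_nhdsWithin_iff]
    constructor
    · rw [← NNReal.tendsto_coe]
      have hinv : Filter.Tendsto (fun n : ℕ => ((s:ℝ≥0):ℝ) + ((2:ℝ) ^ n)⁻¹)
          Filter.atTop (𝓝 ((s:ℝ≥0):ℝ)) := by
        have : Filter.Tendsto (fun n : ℕ => ((2:ℝ) ^ n)⁻¹) Filter.atTop (𝓝 0) := by
          simpa [inv_pow] using tendsto_pow_atTop_nhds_zero_of_lt_one
            (by norm_num : (0:ℝ) ≤ 2⁻¹) (by norm_num : (2:ℝ)⁻¹ < 1)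
        simpa using tendsto_const_nhds.add this
      apply tendsto_of_tendsto_of_tendsto_of_le_of_le (g := fun _ : ℕ => ((s:ℝ≥0):ℝ)) (h := _)
        tendsto_const_nhds hinv (fun n => by exact_mod_cast hlow n s) (fun n => hup n s)
    · exact Filter.Eventually.of_forall fun n => hlow n s
  have hn : ∀ n : ℕ, Measurable fun p : Set.Iic t × α => Z (ρ n p.1) p.2 := by
    intro n s hs
    have hdecomp : (fun p : Set.Iic t × α => Z (ρ n p.1) p.2) ⁻¹' s =
        ⋃ k : ℕ, ({x : Set.Iic t | ⌊(x : ℝ≥0) * 2 ^ n⌋₊ = k} ×ˢ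
          (Z (min t (((k + 1 : ℕ) : ℝ≥0) / 2 ^ n)) ⁻¹' s)) := by
      ext ⟨x, a⟩
      simp only [Set.mem_preimage, Set.mem_iUnion, Set.mem_prod, Set.mem_setOf_eq]
      constructor
      · intro h
        exact ⟨⌊(x : ℝ≥0) * 2 ^ n⌋₊, rfl, h⟩
      · rintro ⟨k, hk, h⟩
        subst hk
        exact h
    rw [hdecomp]
    refine MeasurableSet.iUnion fun k => MeasurableSet.prod ?_ ?_
    · have : {x : Set.Iic t | ⌊(x : ℝ≥0) * 2 ^ n⌋₊ = k} =
          (fun x : Set.Iic t => (x : ℝ≥0)) ⁻¹'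
            (Set.Ico ((k : ℝ≥0) / 2 ^ n) (((k : ℝ≥0) + 1) / 2 ^ n)) := by
        ext x
        simp only [Set.mem_setOf_eq, Set.mem_preimage, Set.mem_Ico,
          div_le_iff₀ (two_pow_pos n), lt_div_iff₀ (two_pow_pos n),
          Nat.floor_eq_iff (zero_le : (0:ℝ≥0) ≤ (x : ℝ≥0) * 2 ^ n)]
      rw [this]
      exact measurable_subtype_coe measurableSet_Ico
    · exact Measurable.mono (hZ _) (hG (min_le_left _ _)) le_rfl hs
  exact measurable_of_tendsto_metrizable hn
    (tendsto_pi_nhds.2 fun p => ((hrc p.2 p.1.1).tendsto).comp (hρtend p.1))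

end Aux

section Aux2

open Set Filter Topology

set_option maxHeartbeats 1000000 in
set_option synthInstance.maxHeartbeats 400000 in
instance polishCanon (d : ℕ) : PolishSpace (CanonSp d) := inferInstance

theorem denseRange_toNNReal_rat : DenseRange (fun q : ℚ => Real.toNNReal q) := by
  have hsurj : Function.Surjective Real.toNNReal := fun x => ⟨x, Real.toNNReal_coe⟩
  exact DenseRange.comp hsurj.denseRange Rat.denseRange_cast continuous_real_toNNReal

/-- The cylindrical σ-algebra on the canonical space. -/
def cylSigma (d : ℕ) : MeasurableSpace (CanonSp d) :=
  ⨆ u : ℝ≥0, MeasurableSpace.comap (fun ω : CanonSp d => ω u) inferInstance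

theorem le_cylSigma {d : ℕ} (u : ℝ≥0) :
    MeasurableSpace.comap (fun ω : CanonSp d => ω u) inferInstance ≤ cylSigma d :=
  le_iSup (fun v : ℝ≥0 => MeasurableSpace.comap (fun ω : CanonSp d => ω v) inferInstance) u

set_option maxHeartbeats 1000000 in
set_option synthInstance.maxHeartbeats 400000 in
/-- The Borel σ-algebra of the canonical space is the cylindrical σ-algebra. -/
theorem borel_le_cyl (d : ℕ) :
    (inferInstance : MeasurableSpace (CanonSp d)) ≤ cylSigma d := by
  set J : CanonSp d → (ℚ → EuclideanSpace ℝ (Fin d)) :=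
    fun ω q => ω (Real.toNNReal q) with hJ
  have hJc : Continuous J := continuous_pi fun q => ContinuousEvalConst.continuous_eval_const _
  have hJi : Function.Injective J := by
    intro ω ω' h
    apply ContinuousMap.ext
    intro u
    have heq : Set.EqOn (fun u : ℝ≥0 => ω u) (fun u => ω' u)
        (Set.range fun q : ℚ => Real.toNNReal q) := by
      rintro _ ⟨q, rfl⟩
      exact congrFun h q
    exact congrFun (Continuous.ext_on denseRange_toNNReal_rat ω.continuous ω'.continuous heq) u
  haveI : BorelSpace (CanonSp d) := ⟨rfl⟩
  have hJe : MeasurableEmbedding J := hJc.measurableEmbedding hJi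
  have key : ∀ u : ℝ≥0, Measurable[cylSigma d] fun ω : CanonSp d => ω u := fun u =>
    Measurable.of_comap_le (le_cylSigma u)
  have hJm : Measurable[cylSigma d] J :=
    @measurable_pi_lambda _ _ _ (cylSigma d) _ J (fun q => key (Real.toNNReal q))
  intro s hs
  have hps : J ⁻¹' (J '' s) = s := Function.Injective.preimage_image hJi s
  rw [← hps]
  exact hJm (hJe.measurableSet_image' hs)

/-- Evaluation of the stopped path. -/
theorem stoppedPath_apply {d : ℕ} (ω : CanonSp d) (t u : ℝ≥0) :
    stoppedPath ω t u = ω (min t u) := rfl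

theorem eval_measurable_canonFil {d : ℕ} {r u : ℝ≥0} (hru : r ≤ u) :
    Measurable[canonFil d u] fun ω : CanonSp d => ω r :=
  Measurable.of_comap_le <| le_biSup
    (fun v : ℝ≥0 => MeasurableSpace.comap (fun ω : CanonSp d => ω v) inferInstance)
    (Set.mem_Iic.2 hru)

/-- Any right-continuous adapted real process is optional-measurable. -/
theorem measurable_optional {α : Type*} {G : ℝ≥0 → MeasurableSpace α} (Z : ℝ≥0 → α → ℝ)
    (h1 : ∀ u, Measurable[G u] (Z u))
    (h2 : ∀ a, ∀ u : ℝ≥0, ContinuousWithinAt (fun v => Z v a) (Set.Ici u) u) :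
    Measurable[optionalSigma G] fun p : ℝ≥0 × α => Z p.1 p.2 := fun _s hs =>
  MeasurableSpace.measurableSet_generateFrom ⟨Z, h1, h2, ⟨_, hs, rfl⟩⟩

theorem measurable_fst_optional {α : Type*} (G : ℝ≥0 → MeasurableSpace α) :
    Measurable[optionalSigma G] fun p : ℝ≥0 × α => p.1 := by
  have h := measurable_optional (G := G) (fun u (_ : α) => (u : ℝ))
    (fun u => measurable_const) (fun a u => NNReal.continuous_coe.continuousWithinAt)
  have heq : (fun p : ℝ≥0 × α => p.1) =
      fun p : ℝ≥0 × α => Real.toNNReal ((p.1 : ℝ)) := by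
    ext p
    simp [Real.toNNReal_coe]
  rw [heq]
  exact measurable_real_toNNReal.comp h

theorem measurable_evalmin_optional (d : ℕ) (r : ℝ≥0) :
    Measurable[optionalSigma (fun s => canonFil d s)]
      fun p : ℝ≥0 × CanonSp d => p.2 (min p.1 r) := by
  letI : MeasurableSpace (ℝ≥0 × CanonSp d) := optionalSigma (fun s => canonFil d s)
  refine (MeasurableEquiv.toLp 2 (Fin d → ℝ)).measurable.comp
    (f := fun p : ℝ≥0 × CanonSp d => fun i => p.2 (min p.1 r) i) (measurable_pi_iff.2 fun i => ?_)
  exact measurable_optional (fun u (ω : CanonSp d) => ω (min u r) i)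
    (fun u => ((continuous_apply i).comp (PiLp.continuous_ofLp 2 _)).measurable.comp
      (eval_measurable_canonFil (min_le_left u r)))
    (fun ω u => (((continuous_apply i).comp ((PiLp.continuous_ofLp 2 _).comp
      (ω.continuous.comp (continuous_id.min continuous_const)))).continuousWithinAt))

/-- Auxiliary σ-algebra: sets whose product with a fixed time set is `m'`-measurable. -/
def interSigma {α : Type*} (m' : MeasurableSpace (ℝ≥0 × α)) (J : Set ℝ≥0)
    (hJ : MeasurableSet[m'] (J ×ˢ (Set.univ : Set α))) : MeasurableSpace α where
  MeasurableSet' A := MeasurableSet[m'] (J ×ˢ A)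
  measurableSet_empty := by
    show MeasurableSet[m'] (J ×ˢ (∅ : Set α))
    rw [Set.prod_empty]
    exact @MeasurableSet.empty _ m'
  measurableSet_compl := fun A hA => by
    show MeasurableSet[m'] (J ×ˢ Aᶜ)
    have h : J ×ˢ Aᶜ = (J ×ˢ (Set.univ : Set α)) \ (J ×ˢ A) := by
      ext ⟨t, a⟩
      by_cases ht : t ∈ J <;> simp [ht]
    rw [h]
    exact hJ.diff hA
  measurableSet_iUnion := fun f hf => by
    show MeasurableSet[m'] (J ×ˢ ⋃ i, f i)
    rw [Set.prod_iUnion]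
    exact MeasurableSet.iUnion hf

theorem pred_le_opt (d : ℕ) :
    predictableSigma (fun s => canonFil d s) ≤ optionalSigma (fun s => canonFil d s) := by
  apply MeasurableSpace.generateFrom_le
  rintro S (⟨A, hA, rfl⟩ | ⟨u, v, A, huv, hA, rfl⟩)
  · -- `{0} ×ˢ A` with `A ∈ F_0`
    have hJ : MeasurableSet[optionalSigma (fun s => canonFil d s)]
        (({0} : Set ℝ≥0) ×ˢ (Set.univ : Set (CanonSp d))) := by
      have h : ({0} : Set ℝ≥0) ×ˢ (Set.univ : Set (CanonSp d)) =
          (fun p : ℝ≥0 × CanonSp d => p.1) ⁻¹' {0} := by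
        ext ⟨t, ω⟩; simp [eq_comm]
      rw [h]
      exact measurable_fst_optional _ (measurableSet_singleton 0)
    have hle : canonFil d 0 ≤ interSigma _ _ hJ := by
      refine iSup₂_le fun r hr => ?_
      rintro A ⟨B, hB, rfl⟩
      have hr0 : r = 0 := le_antisymm hr (zero_le : (0:ℝ≥0) ≤ r)
      show MeasurableSet[optionalSigma (fun s => canonFil d s)]
        (({0} : Set ℝ≥0) ×ˢ ((fun ω : CanonSp d => ω r) ⁻¹' B))
      have h : ({0} : Set ℝ≥0) ×ˢ ((fun ω : CanonSp d => ω r) ⁻¹' B) =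
          ((fun p : ℝ≥0 × CanonSp d => p.1) ⁻¹' {0}) ∩
          ((fun p : ℝ≥0 × CanonSp d => p.2 (min p.1 r)) ⁻¹' B) := by
        ext ⟨t, ω⟩
        have hmin : min t r = r := by rw [hr0]; exact min_eq_right (zero_le : (0:ℝ≥0) ≤ t)
        constructor
        · rintro ⟨ht, hω⟩
          exact ⟨ht, by rwa [Set.mem_preimage, hmin]⟩
        · rintro ⟨ht, hω⟩
          exact ⟨ht, by rwa [Set.mem_preimage, hmin] at hω⟩
      rw [h]
      exact ((measurable_fst_optional _) (measurableSet_singleton 0)).inter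
        (measurable_evalmin_optional d r hB)
    exact hle A hA
  · -- `Ioc u v ×ˢ A` with `A ∈ F_u`
    have hJ : MeasurableSet[optionalSigma (fun s => canonFil d s)]
        ((Set.Ioc u v) ×ˢ (Set.univ : Set (CanonSp d))) := by
      have h : (Set.Ioc u v) ×ˢ (Set.univ : Set (CanonSp d)) =
          (fun p : ℝ≥0 × CanonSp d => p.1) ⁻¹' (Set.Ioc u v) := by
        ext ⟨t, ω⟩; simp
      rw [h]
      exact measurable_fst_optional _ measurableSet_Ioc
    have hle : canonFil d u ≤ interSigma _ _ hJ := by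
      refine iSup₂_le fun r hr => ?_
      rintro A ⟨B, hB, rfl⟩
      show MeasurableSet[optionalSigma (fun s => canonFil d s)]
        ((Set.Ioc u v) ×ˢ ((fun ω : CanonSp d => ω r) ⁻¹' B))
      have h : (Set.Ioc u v) ×ˢ ((fun ω : CanonSp d => ω r) ⁻¹' B) =
          ((fun p : ℝ≥0 × CanonSp d => p.1) ⁻¹' (Set.Ioc u v)) ∩
          ((fun p : ℝ≥0 × CanonSp d => p.2 (min p.1 r)) ⁻¹' B) := by
        ext ⟨t, ω⟩
        simp only [Set.mem_prod, Set.mem_preimage, Set.mem_inter_iff]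
        constructor
        · rintro ⟨ht, hω⟩
          exact ⟨ht, by rwa [min_eq_right ((Set.mem_Iic.1 hr).trans ht.1.le)]⟩
        · rintro ⟨ht, hω⟩
          exact ⟨ht, by rwa [min_eq_right ((Set.mem_Iic.1 hr).trans ht.1.le)] at hω⟩
      rw [h]
      exact ((measurable_fst_optional _) measurableSet_Ioc).inter
        (measurable_evalmin_optional d r hB)
    exact hle A hA

theorem prod_mono_right {β γ : Type*} (m : MeasurableSpace β) {m1 m2 : MeasurableSpace γ}
    (h : m1 ≤ m2) : m.prod m1 ≤ m.prod m2 :=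
  sup_le_sup le_rfl (MeasurableSpace.comap_mono h)

/-- The invariance σ-algebra for the stopped path at time `s`. -/
def invSigma (d : ℕ) (s : ℝ≥0) : MeasurableSpace (CanonSp d) where
  MeasurableSet' A := ∀ ω, ω ∈ A ↔ stoppedPath ω s ∈ A
  measurableSet_empty := fun _ => Iff.rfl
  measurableSet_compl := fun A hA ω => not_congr (hA ω)
  measurableSet_iUnion := fun f hf ω => by
    simp only [Set.mem_iUnion]
    exact exists_congr fun i => hf i ω

theorem canonFil_le_invSigma (d : ℕ) (s : ℝ≥0) : canonFil d s ≤ invSigma d s := by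
  refine iSup₂_le fun r hr => ?_
  rintro A ⟨B, hB, rfl⟩ ω
  show ω r ∈ B ↔ stoppedPath ω s r ∈ B
  rw [stoppedPath_apply, min_eq_right (Set.mem_Iic.1 hr)]

end Aux2

set_option maxHeartbeats 2000000 in
/-- For a process `Y : ℝ₊ × Ω → E` on the canonical space `Ω`
with canonical filtration `F` and Polish target `E`, the following are equivalent:
(i) `Y` is `F`-predictable; (ii) `Y` is `F`-optional; (iii) `Y` is `F`-progressively
measurable; (iv) `Y` is `B(ℝ₊) ⊗ 𝓕`-measurable and `F`-adapted; (v) `Y` is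
`B(ℝ₊) ⊗ 𝓕`-measurable and `Y_s(ω) = Y_s([ω]_s)` for all `(s, ω)`. -/
theorem canonical_measurability_tfae {d : ℕ}
    {E : Type*} [MeasurableSpace E] [TopologicalSpace E] [PolishSpace E] [BorelSpace E]
    (Y : ℝ≥0 → CanonSp d → E) :
    [Measurable[predictableSigma (fun s => canonFil d s)]
        (fun p : ℝ≥0 × CanonSp d => Y p.1 p.2),
      Measurable[optionalSigma (fun s => canonFil d s)]
        (fun p : ℝ≥0 × CanonSp d => Y p.1 p.2),
      ProgMeas (fun s => canonFil d s) Y,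
      Measurable (fun p : ℝ≥0 × CanonSp d => Y p.1 p.2) ∧
        (∀ s, Measurable[canonFil d s] (Y s)),
      Measurable (fun p : ℝ≥0 × CanonSp d => Y p.1 p.2) ∧
        (∀ (s : ℝ≥0) (ω : CanonSp d), Y s ω = Y s (stoppedPath ω s))].TFAE := by
  tfae_have 1 → 2 := by
    intro h
    exact h.mono (pred_le_opt d) le_rfl
  tfae_have 2 → 3 := by
    intro h t s hs
    have hY := h hs
    have hle : optionalSigma (fun s => canonFil d s) ≤
        MeasurableSpace.map (fun p : Set.Iic t × CanonSp d => ((p.1 : ℝ≥0), p.2))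
          ((inferInstance : MeasurableSpace (Set.Iic t)).prod (canonFil d t)) := by
      apply MeasurableSpace.generateFrom_le
      rintro S ⟨Z, hZ1, hZ2, B, hB, rfl⟩
      exact measurable_rightCont_restrict (fun a b hab => (canonFil d).mono hab)
        Z hZ1 hZ2 t hB
    exact hle _ hY
  tfae_have 3 → 4 := by
    intro h
    constructor
    · intro B hB
      have key : ∀ n : ℕ,
          MeasurableSet[(inferInstance :
              MeasurableSpace (Set.Iic ((n : ℕ) : ℝ≥0) × CanonSp d))]
            ((fun p : Set.Iic ((n : ℕ) : ℝ≥0) × CanonSp d => Y p.1.1 p.2) ⁻¹' B) := by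
        intro n
        exact prod_mono_right _ ((canonFil d).le ((n : ℕ) : ℝ≥0)) _ (h ((n : ℕ) : ℝ≥0) hB)
      have hcover : (fun p : ℝ≥0 × CanonSp d => Y p.1 p.2) ⁻¹' B =
          ⋃ n : ℕ, (Prod.map (Subtype.val : Set.Iic ((n : ℕ) : ℝ≥0) → ℝ≥0)
              (id : CanonSp d → CanonSp d)) ''
            ((fun p : Set.Iic ((n : ℕ) : ℝ≥0) × CanonSp d => Y p.1.1 p.2) ⁻¹' B) := by
        ext ⟨t, ω⟩
        simp only [Set.mem_preimage, Set.mem_iUnion, Set.mem_image]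
        constructor
        · intro hmem
          obtain ⟨n, hn⟩ := exists_nat_ge t
          exact ⟨n, ⟨⟨t, Set.mem_Iic.2 hn⟩, ω⟩, hmem, rfl⟩
        · rintro ⟨n, ⟨q, ω'⟩, hq, heq⟩
          have h1 : (q : ℝ≥0) = t := congrArg Prod.fst heq
          have h2 : ω' = ω := congrArg Prod.snd heq
          rw [← h1, ← h2]
          exact hq
      rw [hcover]
      refine MeasurableSet.iUnion fun n => ?_
      have hemb : MeasurableEmbedding
          (Prod.map (Subtype.val : Set.Iic ((n : ℕ) : ℝ≥0) → ℝ≥0)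
            (id : CanonSp d → CanonSp d)) :=
        (MeasurableEmbedding.subtype_coe measurableSet_Iic).prodMap MeasurableEmbedding.id
      exact hemb.measurableSet_image' (key n)
    · intro s
      have hp : @Measurable (CanonSp d) (Set.Iic s × CanonSp d) (canonFil d s)
          ((inferInstance : MeasurableSpace (Set.Iic s)).prod (canonFil d s))
          (fun ω : CanonSp d => ((⟨s, Set.mem_Iic.2 le_rfl⟩ : Set.Iic s), ω)) :=
        @measurable_prodMk_left (Set.Iic s) (CanonSp d) _ (canonFil d s) _
      exact (h s).comp hp
  tfae_have 4 → 5 := by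
    rintro ⟨hjoint, hadapt⟩
    refine ⟨hjoint, fun s ω => ?_⟩
    have hA : MeasurableSet[canonFil d s] (Y s ⁻¹' {Y s (stoppedPath ω s)}) :=
      hadapt s (measurableSet_singleton _)
    have h2 := canonFil_le_invSigma d s _ hA ω
    exact h2.2 rfl
  tfae_have 5 → 1 := by
    rintro ⟨hjoint, hstop⟩
    intro B hB
    have hYB : MeasurableSet ((fun p : ℝ≥0 × CanonSp d => Y p.1 p.2) ⁻¹' B) := hjoint hB
    have h1 : Measurable[predictableSigma (fun s => canonFil d s)]
        (fun p : ℝ≥0 × CanonSp d => p.1) :=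
      measurable_predictable (fun u (_ : CanonSp d) => u) (fun u => measurable_const)
        (fun a => continuous_id)
    have hkey : ∀ u : ℝ≥0, Measurable[predictableSigma (fun s => canonFil d s)]
        (fun p : ℝ≥0 × CanonSp d => p.2 (min p.1 u)) := fun u =>
      measurable_predictable (fun v (ω : CanonSp d) => ω (min v u))
        (fun v => eval_measurable_canonFil (min_le_left v u))
        (fun ω => ω.continuous.comp (continuous_id.min continuous_const))
    have hmaple : cylSigma d ≤ MeasurableSpace.map
        (fun p : ℝ≥0 × CanonSp d => stoppedPath p.2 p.1)
        (predictableSigma (fun s => canonFil d s)) := by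
      refine iSup_le fun u => ?_
      rintro A ⟨B', hB', rfl⟩
      exact hkey u hB'
    have h2 : Measurable[predictableSigma (fun s => canonFil d s)]
        (fun p : ℝ≥0 × CanonSp d => stoppedPath p.2 p.1) :=
      fun A hA => hmaple _ (borel_le_cyl d _ hA)
    have hφ : Measurable[predictableSigma (fun s => canonFil d s)]
        (fun p : ℝ≥0 × CanonSp d => (p.1, stoppedPath p.2 p.1)) :=
      Measurable.prodMk h1 h2
    have hset : (fun p : ℝ≥0 × CanonSp d => Y p.1 p.2) ⁻¹' B =
        (fun p : ℝ≥0 × CanonSp d => (p.1, stoppedPath p.2 p.1)) ⁻¹'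
          ((fun p : ℝ≥0 × CanonSp d => Y p.1 p.2) ⁻¹' B) := by
      ext ⟨t, ω⟩
      simp only [Set.mem_preimage]
      rw [← hstop t ω]
    rw [hset]
    exact hφ hYB
  tfae_finish
end
end

section
/- Let Ω = C(ℝ₊, ℝ^d) be the canonical space with canonical filtration F and Wiener measure P, let U be a Polish space, ν a U-valued F-predictable process, η a finite-valued F-stopping time, and (P_w)_{w∈Ω} a regular conditional probability of P given F_η. Then for P-almost every w ∈ Ω, P_w( ν_s = ν^{η(w),w}_s for all s ≥ 0 ) = 1, where ν^{t,w}_s(ω) := ν_s(w ⊗_t ω) denotes the shifted control. -/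
open MeasureTheory ProbabilityTheory
open scoped NNReal

noncomputable section

/-- The σ-algebra generated by the collection `N^P` of `P`-negligible sets. -/
def nullSigma {α : Type*} {m : MeasurableSpace α} (P : @Measure α m) : MeasurableSpace α :=
  MeasurableSpace.generateFrom {A | ∃ N, MeasurableSet[m] N ∧ P N = 0 ∧ A ⊆ N}

/-- The `P`-augmented canonical filtration `F^P_s := F_s ∨ N^P`. -/
def augFil (d : ℕ) (P : Measure (CanonSp d)) :
    Filtration ℝ≥0 (⊤ : MeasurableSpace (CanonSp d)) where
  seq s := canonFil d s ⊔ nullSigma P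
  mono' := fun s t hst => sup_le_sup_right ((canonFil d).mono hst) _
  le' := fun _ => le_top

/-- The concatenated path `w ⊗_t ω`, equal to `w` on `[0, t]` and to
`s ↦ w(t) + ω(s) - ω(t)` on `[t, ∞)`. -/
def concatPath {d : ℕ} (w : CanonSp d) (t : ℝ≥0) (ω : CanonSp d) : CanonSp d :=
  ⟨fun s => w (min s t) + ω (max s t) - ω t, by
    refine Continuous.sub (Continuous.add ?_ ?_) continuous_const
    · exact w.continuous.comp (continuous_id.min continuous_const)
    · exact ω.continuous.comp (continuous_id.max continuous_const)⟩

/-- `P` is the Wiener measure on the canonical space: it is a probability measure,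
the canonical process starts at `0` a.s., its increments after time `s` are
independent of `F_s`, and the increment `B_t - B_s` is a `d`-dimensional centered
Gaussian vector of covariance `(t-s) Id`. -/
def IsWienerMeasure (d : ℕ) (P : Measure (CanonSp d)) : Prop :=
  IsProbabilityMeasure P ∧
  (∀ᵐ ω ∂P, ω 0 = 0) ∧
  (∀ s t : ℝ≥0, s ≤ t →
    Indep (MeasurableSpace.comap (fun ω : CanonSp d => ω t - ω s) inferInstance)
      (canonFil d s) P) ∧
  (∀ s t : ℝ≥0, s ≤ t →
    P.map (fun ω : CanonSp d => (EuclideanSpace.equiv (Fin d) ℝ) (ω t - ω s)) =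
      Measure.pi fun _ : Fin d => gaussianReal 0 (t - s))

/-- `(P_w)_{w}` is a regular conditional probability of `P` given the
sub-σ-algebra `G`. -/
def IsRCP {α : Type*} {m : MeasurableSpace α} (P : @Measure α m)
    (G : MeasurableSpace α) (Pw : α → @Measure α m) : Prop :=
  (∀ w, IsProbabilityMeasure (Pw w)) ∧
  (∀ A : Set α, MeasurableSet[m] A → Measurable[G] fun w => Pw w A) ∧
  (∀ A : Set α, MeasurableSet[m] A → ∀ B : Set α, MeasurableSet[G] B →
    P (A ∩ B) = ∫⁻ w in B, Pw w A ∂P)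

/-- For an r.c.p. and `A ∈ G`, a.e. `P_w(A) = 1_A(w)`. -/
lemma IsRCP.ae_indicator {α : Type*} {G : MeasurableSpace α} [m : MeasurableSpace α]
    (hG : G ≤ m) {P : Measure α} [IsProbabilityMeasure P] {Pw : α → Measure α}
    (hPw : IsRCP P G Pw) {A : Set α} (hA : MeasurableSet[G] A) :
    ∀ᵐ w ∂P, Pw w A = A.indicator (fun _ => (1 : ENNReal)) w := by
  have hAm : MeasurableSet[m] A := hG A hA
  have hmeas : Measurable (fun w => Pw w A) := (hPw.2.1 A hAm).mono hG le_rfl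
  -- zero on Aᶜ
  have h0 : ∀ᵐ w ∂P, w ∈ Aᶜ → Pw w A = 0 := by
    have := hPw.2.2 A hAm Aᶜ hA.compl
    rw [Set.inter_compl_self, measure_empty] at this
    exact (setLIntegral_eq_zero_iff hAm.compl hmeas).mp this.symm
  -- one on A
  have hle1 : ∀ w, Pw w A ≤ 1 := fun w => by
    haveI := hPw.1 w; exact prob_le_one
  have h1 : ∀ᵐ w ∂P, w ∈ A → Pw w A = 1 := by
    have hint : ∫⁻ w in A, Pw w A ∂P = ∫⁻ _ in A, 1 ∂P := by
      rw [← hPw.2.2 A hAm A hA, Set.inter_self, setLIntegral_one]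
    have hne : ∫⁻ w in A, Pw w A ∂P ≠ ⊤ := by
      rw [hint, setLIntegral_one]; exact (measure_lt_top P A).ne
    have hsub : ∫⁻ w in A, (1 - Pw w A) ∂P = 0 := by
      rw [lintegral_sub hmeas hne (Filter.Eventually.of_forall fun w => hle1 w), hint,
        tsub_self]
    have := (setLIntegral_eq_zero_iff hAm (measurable_const.sub hmeas)).mp hsub
    filter_upwards [this] with w hw hwA
    exact le_antisymm (hle1 w) (tsub_eq_zero_iff_le.mp (hw hwA))
  filter_upwards [h0, h1] with w hw0 hw1
  by_cases hwA : w ∈ A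
  · rw [hw1 hwA, Set.indicator_of_mem hwA]
  · rw [hw0 hwA, Set.indicator_of_notMem hwA]

/-- For an r.c.p. and a `G`-measurable `ℝ≥0`-valued function `f`, a.e. `w` the measure
`P_w` is concentrated on `{f = f w}`. -/
lemma IsRCP.ae_fiber {α : Type*} {G : MeasurableSpace α} [m : MeasurableSpace α]
    (hG : G ≤ m) {P : Measure α} [IsProbabilityMeasure P] {Pw : α → Measure α}
    (hPw : IsRCP P G Pw) {f : α → ℝ≥0} (hf : Measurable[G] f) :
    ∀ᵐ w ∂P, Pw w {ω | f ω = f w} = 1 := by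
  have hmem : ∀ q : ℚ, MeasurableSet[G] (f ⁻¹' Set.Iic (Real.toNNReal q)) :=
    fun q => hf measurableSet_Iic
  have hae : ∀ᵐ w ∂P, ∀ q : ℚ, Pw w (f ⁻¹' Set.Iic (Real.toNNReal q)) =
      (f ⁻¹' Set.Iic (Real.toNNReal q)).indicator (fun _ => (1 : ENNReal)) w :=
    ae_all_iff.mpr fun q => hPw.ae_indicator hG (hmem q)
  filter_upwards [hae] with w hw
  haveI := hPw.1 w
  set t := f w with ht
  have hN1 : ∀ q : ℚ, t ≤ Real.toNNReal q → Pw w (f ⁻¹' Set.Iic (Real.toNNReal q))ᶜ = 0 := by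
    intro q hq
    have h1 : Pw w (f ⁻¹' Set.Iic (Real.toNNReal q)) = 1 := by
      rw [hw q, Set.indicator_of_mem]
      exact hq
    rw [measure_compl (hG _ (hmem q)) (measure_ne_top _ _), h1, measure_univ, tsub_self]
  have hN2 : ∀ q : ℚ, Real.toNNReal q < t → Pw w (f ⁻¹' Set.Iic (Real.toNNReal q)) = 0 := by
    intro q hq
    rw [hw q, Set.indicator_of_notMem]
    simp only [Set.mem_preimage, Set.mem_Iic, not_le, ← ht]
    exact hq
  have hcompl : Pw w {ω | f ω = t}ᶜ = 0 := by
    have hsub : {ω | f ω = t}ᶜ ⊆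
        (⋃ (q : ℚ) (_ : t ≤ Real.toNNReal q), (f ⁻¹' Set.Iic (Real.toNNReal q))ᶜ) ∪
        ⋃ (q : ℚ) (_ : Real.toNNReal q < t), f ⁻¹' Set.Iic (Real.toNNReal q) := by
      intro ω hω
      rcases lt_or_gt_of_ne (hω : ¬ f ω = t) with hlt | hgt
      · right
        obtain ⟨q, hq1, hq2⟩ :=
          exists_rat_btwn (show (f ω : ℝ) < (t : ℝ) from NNReal.coe_lt_coe.mpr hlt)
        have hqpos : (0 : ℝ) < (t : ℝ) := lt_of_le_of_lt (f ω).coe_nonneg (hq1.trans hq2)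
        refine Set.mem_iUnion.2 ⟨q, Set.mem_iUnion.2 ⟨?_, ?_⟩⟩
        · rw [← Real.toNNReal_coe (r := t)]
          exact (Real.toNNReal_lt_toNNReal_iff hqpos).mpr hq2
        · simp only [Set.mem_preimage, Set.mem_Iic]
          rw [← Real.toNNReal_coe (r := f ω)]
          exact Real.toNNReal_mono hq1.le
      · left
        obtain ⟨q, hq1, hq2⟩ :=
          exists_rat_btwn (show (t : ℝ) < (f ω : ℝ) from NNReal.coe_lt_coe.mpr hgt)
        refine Set.mem_iUnion.2 ⟨q, Set.mem_iUnion.2 ⟨?_, ?_⟩⟩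
        · rw [← Real.toNNReal_coe (r := t)]
          exact Real.toNNReal_mono hq1.le
        · simp only [Set.mem_compl_iff, Set.mem_preimage, Set.mem_Iic, not_le]
          rw [← Real.toNNReal_coe (r := f ω)]
          have hqpos : (0 : ℝ) < ((f ω : ℝ≥0) : ℝ) := lt_of_le_of_lt t.coe_nonneg (hq1.trans hq2)
          exact (Real.toNNReal_lt_toNNReal_iff hqpos).mpr hq2
    exact measure_mono_null hsub (measure_union_null
      (measure_iUnion_null fun q => measure_iUnion_null fun hq => hN1 q hq)
      (measure_iUnion_null fun q => measure_iUnion_null fun hq => hN2 q hq))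
  have hge : (1 : ENNReal) ≤ Pw w {ω | f ω = t} := by
    have hle := measure_union_le (μ := Pw w) {ω | f ω = t} {ω | f ω = t}ᶜ
    rw [Set.union_compl_self, measure_univ, hcompl, add_zero] at hle
    exact hle
  exact le_antisymm prob_le_one hge


/-- `ℝ`-valued version of `IsRCP.ae_fiber`. -/
lemma IsRCP.ae_fiber_real {α : Type*} {G : MeasurableSpace α} [m : MeasurableSpace α]
    (hG : G ≤ m) {P : Measure α} [IsProbabilityMeasure P] {Pw : α → Measure α}
    (hPw : IsRCP P G Pw) {f : α → ℝ} (hf : Measurable[G] f) :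
    ∀ᵐ w ∂P, Pw w {ω | f ω = f w} = 1 := by
  have hmem : ∀ q : ℚ, MeasurableSet[G] (f ⁻¹' Set.Iic (q : ℝ)) :=
    fun q => hf measurableSet_Iic
  have hae : ∀ᵐ w ∂P, ∀ q : ℚ, Pw w (f ⁻¹' Set.Iic (q : ℝ)) =
      (f ⁻¹' Set.Iic (q : ℝ)).indicator (fun _ => (1 : ENNReal)) w :=
    ae_all_iff.mpr fun q => hPw.ae_indicator hG (hmem q)
  filter_upwards [hae] with w hw
  haveI := hPw.1 w
  set t := f w with ht
  have hN1 : ∀ q : ℚ, t ≤ (q : ℝ) → Pw w (f ⁻¹' Set.Iic (q : ℝ))ᶜ = 0 := by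
    intro q hq
    have h1 : Pw w (f ⁻¹' Set.Iic (q : ℝ)) = 1 := by
      rw [hw q, Set.indicator_of_mem]
      exact hq
    rw [measure_compl (hG _ (hmem q)) (measure_ne_top _ _), h1, measure_univ, tsub_self]
  have hN2 : ∀ q : ℚ, (q : ℝ) < t → Pw w (f ⁻¹' Set.Iic (q : ℝ)) = 0 := by
    intro q hq
    rw [hw q, Set.indicator_of_notMem]
    simp only [Set.mem_preimage, Set.mem_Iic, not_le, ← ht]
    exact hq
  have hcompl : Pw w {ω | f ω = t}ᶜ = 0 := by
    have hsub : {ω | f ω = t}ᶜ ⊆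
        (⋃ (q : ℚ) (_ : t ≤ (q : ℝ)), (f ⁻¹' Set.Iic (q : ℝ))ᶜ) ∪
        ⋃ (q : ℚ) (_ : (q : ℝ) < t), f ⁻¹' Set.Iic (q : ℝ) := by
      intro ω hω
      rcases lt_or_gt_of_ne (hω : ¬ f ω = t) with hlt | hgt
      · right
        obtain ⟨q, hq1, hq2⟩ := exists_rat_btwn hlt
        exact Set.mem_iUnion.2 ⟨q, Set.mem_iUnion.2 ⟨hq2, hq1.le⟩⟩
      · left
        obtain ⟨q, hq1, hq2⟩ := exists_rat_btwn hgt
        refine Set.mem_iUnion.2 ⟨q, Set.mem_iUnion.2 ⟨hq1.le, ?_⟩⟩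
        simp only [Set.mem_compl_iff, Set.mem_preimage, Set.mem_Iic, not_le]
        exact hq2
    exact measure_mono_null hsub (measure_union_null
      (measure_iUnion_null fun q => measure_iUnion_null fun hq => hN1 q hq)
      (measure_iUnion_null fun q => measure_iUnion_null fun hq => hN2 q hq))
  have hge : (1 : ENNReal) ≤ Pw w {ω | f ω = t} := by
    have hle := measure_union_le (μ := Pw w) {ω | f ω = t} {ω | f ω = t}ᶜ
    rw [Set.union_compl_self, measure_univ, hcompl, add_zero] at hle
    exact hle
  exact le_antisymm prob_le_one hge

/-- The evaluation at a time `≤ i` is measurable w.r.t. `F_i`. -/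
lemma measurable_canonFil_eval {d : ℕ} {j i : ℝ≥0} (hj : j ≤ i) :
    Measurable[canonFil d i] (fun ω : CanonSp d => ω j) :=
  measurable_iff_comap_le.mpr
    (le_biSup (fun u => MeasurableSpace.comap (fun ω : CanonSp d => ω u) inferInstance) hj)


/-- On the canonical space with Wiener measure `P`, let `ν` be a
`U`-valued `F`-predictable control (`U` Polish), `η` a (finite-valued) stopping
time of the canonical filtration `F`, and `(P_w)` an r.c.p. of `P` given `F_η`.
Then for `P`-a.e. `w`, `P_w(ν_s = ν^{η(w),w}_s` for all `s ≥ 0) = 1`, where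
`ν^{t,w}_s(ω) := ν_s(w ⊗_t ω)` is the shifted control. -/
theorem rcp_shifted_control_eq {d : ℕ}
    (P : Measure (CanonSp d)) (hP : IsWienerMeasure d P)
    {U : Type*} [MeasurableSpace U] [TopologicalSpace U] [PolishSpace U] [BorelSpace U]
    (ν : ℝ≥0 → CanonSp d → U)
    (hν : Measurable[predictableSigma (fun s => canonFil d s)]
      (fun p : ℝ≥0 × CanonSp d => ν p.1 p.2))
    (η : CanonSp d → ℝ≥0) (hη : IsStoppingTime (canonFil d) (fun ω => (η ω : WithTop ℝ≥0)))
    (Pw : CanonSp d → Measure (CanonSp d))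
    (hPw : IsRCP P hη.measurableSpace Pw) :
    ∀ᵐ w ∂P,
      Pw w {ω | ∀ s : ℝ≥0, ν s ω = ν s (concatPath w (η w) ω)} = 1 := by
  classical
  haveI : IsProbabilityMeasure P := hP.1
  have hGle : hη.measurableSpace ≤ (inferInstance : MeasurableSpace (CanonSp d)) :=
    hη.measurableSpace_le
  -- the shifted evaluation maps are `F_η`-measurable
  have hg : ∀ p : ℚ × Fin d, Measurable[hη.measurableSpace]
      (fun w : CanonSp d => EuclideanSpace.proj (𝕜 := ℝ) p.2 (w (min (Real.toNNReal p.1) (η w)))) := by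
    intro p
    have hadp : StronglyAdapted (canonFil d)
        (fun s (ω : CanonSp d) => EuclideanSpace.proj (𝕜 := ℝ) p.2 (ω (min (Real.toNNReal p.1) s))) := by
      intro i
      exact (((EuclideanSpace.proj (𝕜 := ℝ) p.2).continuous.measurable).comp
        (measurable_canonFil_eval (min_le_right _ i))).stronglyMeasurable
    have hcont : ∀ ω : CanonSp d, Continuous
        (fun s : ℝ≥0 => EuclideanSpace.proj (𝕜 := ℝ) p.2 (ω (min (Real.toNNReal p.1) s))) :=
      fun ω => (EuclideanSpace.proj (𝕜 := ℝ) p.2).continuous.comp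
        (ω.continuous.comp (continuous_const.min continuous_id))
    exact measurable_stoppedValue (hadp.isStronglyProgressive_of_continuous hcont) hη
  -- a.e. `w`, `P_w` is concentrated on the paths with the same stopped data as `w`
  have hηf := hPw.ae_fiber hGle (f := η) hη.measurable.untopA
  have hgf : ∀ᵐ w ∂P, ∀ p : ℚ × Fin d, Pw w {ω | EuclideanSpace.proj (𝕜 := ℝ) p.2
      (ω (min (Real.toNNReal p.1) (η ω))) =
      EuclideanSpace.proj (𝕜 := ℝ) p.2 (w (min (Real.toNNReal p.1) (η w)))} = 1 :=
    ae_all_iff.mpr fun p => hPw.ae_fiber_real hGle (hg p)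
  filter_upwards [hηf, hgf] with w h1 h2
  haveI := hPw.1 w
  set t := η w with htdef
  set T : Set (CanonSp d) := {ω | η ω = t} ∩ ⋂ p : ℚ × Fin d,
    {ω | EuclideanSpace.proj (𝕜 := ℝ) p.2 (ω (min (Real.toNNReal p.1) (η ω))) =
      EuclideanSpace.proj (𝕜 := ℝ) p.2 (w (min (Real.toNNReal p.1) t))} with hTdef
  -- `T` has full `P_w`-measure
  have hTc : Pw w Tᶜ = 0 := by
    have hηm : Measurable η := hη.measurable.untopA.mono hGle le_rfl
    have hsub : Tᶜ ⊆ {ω : CanonSp d | η ω = t}ᶜ ∪ ⋃ p : ℚ × Fin d,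
        {ω : CanonSp d | EuclideanSpace.proj (𝕜 := ℝ) p.2 (ω (min (Real.toNNReal p.1) (η ω))) =
          EuclideanSpace.proj (𝕜 := ℝ) p.2 (w (min (Real.toNNReal p.1) t))}ᶜ := by
      rw [hTdef, Set.compl_inter, Set.compl_iInter]
    refine measure_mono_null hsub (measure_union_null ?_ (measure_iUnion_null fun p => ?_))
    · have hms : MeasurableSet {ω : CanonSp d | η ω = t} := by
        have : {ω : CanonSp d | η ω = t} = η ⁻¹' {t} := rfl
        rw [this]
        exact hηm (measurableSet_singleton t)
      rw [measure_compl hms (measure_ne_top _ _), h1, measure_univ, tsub_self]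
    · have hmp : Measurable (fun ω : CanonSp d =>
          EuclideanSpace.proj (𝕜 := ℝ) p.2 (ω (min (Real.toNNReal p.1) (η ω)))) :=
        (hg p).mono hGle le_rfl
      have hms : MeasurableSet {ω : CanonSp d |
          EuclideanSpace.proj (𝕜 := ℝ) p.2 (ω (min (Real.toNNReal p.1) (η ω))) =
          EuclideanSpace.proj (𝕜 := ℝ) p.2 (w (min (Real.toNNReal p.1) t))} :=
        hmp (measurableSet_singleton _)
      rw [measure_compl hms (measure_ne_top _ _), h2 p, measure_univ, tsub_self]
  have hT1 : (1 : ENNReal) ≤ Pw w T := by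
    have hle := measure_union_le (μ := Pw w) T Tᶜ
    rw [Set.union_compl_self, measure_univ, hTc, add_zero] at hle
    exact hle
  -- on `T`, the concatenated path equals the original path
  have hTsub : T ⊆ {ω | ∀ s : ℝ≥0, ν s ω = ν s (concatPath w (η w) ω)} := by
    rintro ω ⟨hω1, hω2⟩
    have hω1' : η ω = t := hω1
    have hω2' : ∀ p : ℚ × Fin d,
        EuclideanSpace.proj (𝕜 := ℝ) p.2 (ω (min (Real.toNNReal p.1) t)) =
        EuclideanSpace.proj (𝕜 := ℝ) p.2 (w (min (Real.toNNReal p.1) t)) := by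
      intro p
      have h := Set.mem_iInter.mp hω2 p
      simp only [Set.mem_setOf_eq, hω1'] at h
      exact h
    -- agreement on all times `min u t` via density of the rationals
    have hval : ∀ u : ℝ≥0, ω (min u t) = w (min u t) := by
      have hSclosed : IsClosed {u : ℝ≥0 | ω (min u t) = w (min u t)} := by
        refine isClosed_eq ?_ ?_
        · exact ω.continuous.comp (continuous_id.min continuous_const)
        · exact w.continuous.comp (continuous_id.min continuous_const)
      have hdr : DenseRange (Real.toNNReal ∘ (fun q : ℚ => (q : ℝ))) := by
        have hsurj : Function.Surjective Real.toNNReal :=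
          fun x => ⟨(x : ℝ), Real.toNNReal_coe⟩
        exact hsurj.denseRange.comp Rat.denseRange_cast continuous_real_toNNReal
      have hrange : Set.range (Real.toNNReal ∘ (fun q : ℚ => (q : ℝ))) ⊆
          {u : ℝ≥0 | ω (min u t) = w (min u t)} := by
        rintro _ ⟨q, rfl⟩
        have hcoord : ∀ j : Fin d, ω (min (Real.toNNReal q) t) j = w (min (Real.toNNReal q) t) j :=
          fun j => hω2' (q, j)
        refine PiLp.ext fun j => ?_
        exact hcoord j
      have hSuniv : {u : ℝ≥0 | ω (min u t) = w (min u t)} = Set.univ := by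
        rw [← hSclosed.closure_eq, (hdr.mono hrange).closure_eq]
      intro u
      exact (hSuniv ▸ Set.mem_univ u : u ∈ {u : ℝ≥0 | ω (min u t) = w (min u t)})
    have hconcat : concatPath w (η w) ω = ω := by
      refine ContinuousMap.ext fun s => ?_
      show w (min s t) + ω (max s t) - ω t = ω s
      rcases le_total s t with hst | hts
      · rw [min_eq_left hst, max_eq_right hst, add_sub_cancel_right]
        have := hval s
        rw [min_eq_left hst] at this
        exact this.symm
      · have hwt : w t = ω t := by
          have := hval t
          rw [min_self] at this
          exact this.symm
        rw [min_eq_right hts, max_eq_left hts, hwt, add_sub_cancel_left]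
    intro s
    rw [hconcat]
  exact le_antisymm prob_le_one (hT1.trans (measure_mono hTsub))
end
end
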